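/- For all real numbers p, q, let h₁ = −e₁₂ + p(e₁₊+e₁₋) + q(e₂₊+e₂₋) and h₂ = e₁₂ in CGA₊ (the circular translation). Then: (i) h₁ + h̃₁ = 0 and h₁·h̃₁ = 1, so t−h₁ is a motion polynomial; (ii) C = (t−h₁)(t−h₂) is a motion polynomial; (iii) h₁ − h̃₂ = p(e₁₊+e₁₋) + q(e₂₊+e₂₋) satisfies (h₁−h̃₂)·(h₁−h̃₂)~ = 0, hence whenever (p,q) ≠ (0,0) the element h₁ − h̃₂ is a nonzero non-invertible element and the factorization of C is irregular. -/
import Mathlib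


open Polynomial

/-- The quadratic form of signature (4,1) on ℝ⁵ defining conformal geometric algebra. -/
noncomputable def Qcga : QuadraticForm ℝ (Fin 5 → ℝ) :=
  QuadraticMap.weightedSumSquares ℝ (fun i : Fin 5 => if (i : ℕ) = 4 then (-1 : ℝ) else 1)

/-- Conformal geometric algebra CGA = Cl(4,1). -/
abbrev CGA := CliffordAlgebra Qcga

/-- The generators e₁, e₂, e₃, e₊, e₋ of CGA (indexed 0,…,4). -/
noncomputable def eCGA (i : Fin 5) : CGA := CliffordAlgebra.ι Qcga (Pi.single i 1)

namespace Stmt12Aux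
open CliffordAlgebra

noncomputable def m0 : Fin 5 → ℝ := Pi.single 0 1
noncomputable def m1 : Fin 5 → ℝ := Pi.single 1 1
noncomputable def mw : Fin 5 → ℝ := Pi.single 3 1 + Pi.single 4 1

lemma Qval (v : Fin 5 → ℝ) :
    Qcga v = v 0 * v 0 + v 1 * v 1 + v 2 * v 2 + v 3 * v 3 - v 4 * v 4 := by
  have h3 : ((3 : Fin 5) : ℕ) = 3 := rfl
  have h4 : ((4 : Fin 5) : ℕ) = 4 := rfl
  simp [Qcga, QuadraticMap.weightedSumSquares_apply, Fin.sum_univ_five, h3, h4]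
  ring

lemma Qm0 : Qcga m0 = 1 := by simp [Qval, m0, Pi.single_apply]
lemma Qm1 : Qcga m1 = 1 := by simp [Qval, m1, Pi.single_apply]
lemma Qmw : Qcga mw = 0 := by simp [Qval, mw, Pi.single_apply]

lemma o01 : Qcga.IsOrtho m0 m1 := by
  simp [QuadraticMap.IsOrtho, Qval, m0, m1, Pi.single_apply]
lemma o0w : Qcga.IsOrtho m0 mw := by
  simp [QuadraticMap.IsOrtho, Qval, m0, mw, Pi.single_apply]
lemma o1w : Qcga.IsOrtho m1 mw := by
  simp [QuadraticMap.IsOrtho, Qval, m1, mw, Pi.single_apply]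

noncomputable def f0 : CGA := ι Qcga m0
noncomputable def f1 : CGA := ι Qcga m1
noncomputable def g : CGA := ι Qcga mw

lemma f0_sq : f0 * f0 = 1 := by rw [f0, ι_sq_scalar, Qm0, map_one]
lemma f1_sq : f1 * f1 = 1 := by rw [f1, ι_sq_scalar, Qm1, map_one]
lemma g_sq : g * g = 0 := by rw [g, ι_sq_scalar, Qmw, map_zero]

lemma f1f0 : f1 * f0 = -(f0 * f1) := ι_mul_ι_comm_of_isOrtho o01.symm
lemma gf0 : g * f0 = -(f0 * g) := ι_mul_ι_comm_of_isOrtho o0w.symm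
lemma gf1 : g * f1 = -(f1 * g) := ι_mul_ι_comm_of_isOrtho o1w.symm

-- swap-under lemmas: ι a * (ι b * x) = -(ι b * (ι a * x))
lemma f1_f0_swap (x : CGA) : f1 * (f0 * x) = -(f0 * (f1 * x)) :=
  ι_mul_ι_mul_of_isOrtho x o01.symm
lemma g_f0_swap (x : CGA) : g * (f0 * x) = -(f0 * (g * x)) :=
  ι_mul_ι_mul_of_isOrtho x o0w.symm
lemma g_f1_swap (x : CGA) : g * (f1 * x) = -(f1 * (g * x)) :=
  ι_mul_ι_mul_of_isOrtho x o1w.symm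
lemma f1_g_swap (x : CGA) : f1 * (g * x) = -(g * (f1 * x)) :=
  ι_mul_ι_mul_of_isOrtho x o1w
lemma f0_g_swap (x : CGA) : f0 * (g * x) = -(g * (f0 * x)) :=
  ι_mul_ι_mul_of_isOrtho x o0w

noncomputable def a : CGA := f0 * f1
noncomputable def u : CGA := f0 * g
noncomputable def v : CGA := f1 * g

lemma a_sq : a * a = -1 := by
  rw [a, mul_assoc, f1_f0_swap, mul_neg, ← mul_assoc, ← mul_assoc, f0_sq, one_mul, f1_sq]

lemma u_sq : u * u = 0 := by
  rw [u, mul_assoc, g_f0_swap, g_sq, mul_zero, neg_zero, mul_zero]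

lemma v_sq : v * v = 0 := by
  rw [v, mul_assoc, g_f1_swap, g_sq, mul_zero, neg_zero, mul_zero]

lemma uv : u * v = 0 := by
  rw [u, v, mul_assoc, g_f1_swap, g_sq, mul_zero, neg_zero, mul_zero]

lemma vu : v * u = 0 := by
  rw [v, u, mul_assoc, g_f0_swap, g_sq, mul_zero, neg_zero, mul_zero]

lemma au : a * u = -v := by
  rw [a, u, mul_assoc, f1_f0_swap, mul_neg, ← mul_assoc, ← mul_assoc, f0_sq, one_mul, v]

lemma ua : u * a = v := by
  rw [u, a, mul_assoc, g_f0_swap, mul_neg, ← mul_assoc, ← mul_assoc, f0_sq, one_mul,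
    gf1, neg_neg, v]

lemma av : a * v = u := by
  rw [a, v, mul_assoc, ← mul_assoc f1 f1 g, f1_sq, one_mul, u]

lemma va : v * a = -u := by
  rw [v, a, mul_assoc, g_f0_swap, gf1, mul_neg f0, neg_neg, f1_f0_swap, ← mul_assoc f1 f1 g,
    f1_sq, one_mul, u]

lemma rev_a : reverse (Q := Qcga) a = -a := by
  rw [a, f0, f1, reverse.map_mul, reverse_ι, reverse_ι, ← f0, ← f1, f1f0]

lemma rev_u : reverse (Q := Qcga) u = -u := by
  rw [u, f0, g, reverse.map_mul, reverse_ι, reverse_ι, ← f0, ← g, gf0]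

lemma rev_v : reverse (Q := Qcga) v = -v := by
  rw [v, f1, g, reverse.map_mul, reverse_ι, reverse_ι, ← f1, ← g, gf1]

lemma eu : eCGA 0 * eCGA 3 + eCGA 0 * eCGA 4 = u := by
  rw [u, f0, g, mw, m0, map_add, mul_add]; rfl

lemma ev : eCGA 1 * eCGA 3 + eCGA 1 * eCGA 4 = v := by
  rw [v, f1, g, mw, m1, map_add, mul_add]; rfl

lemma ea : eCGA 0 * eCGA 1 = a := by rw [a, f0, f1, m0, m1]; rfl

lemma xsq (p q : ℝ) : (p • u + q • v) * (p • u + q • v) = 0 := by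
  simp only [add_mul, mul_add, smul_mul_assoc, mul_smul_comm, u_sq, uv, vu, v_sq,
    smul_zero, add_zero]

lemma xrev (p q : ℝ) :
    reverse (Q := Qcga) (p • u + q • v) = -(p • u + q • v) := by
  simp only [map_add, map_smul, rev_u, rev_v, smul_neg, neg_add]

lemma hsq (p q : ℝ) :
    (-a + p • u + q • v) * (-a + p • u + q • v) = -1 := by
  simp only [add_mul, mul_add, neg_mul, mul_neg, smul_mul_assoc, mul_smul_comm,
    a_sq, au, ua, av, va, u_sq, uv, vu, v_sq, smul_zero, smul_neg, neg_neg]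
  module

lemma hrev (p q : ℝ) :
    reverse (Q := Qcga) (-a + p • u + q • v) = -(-a + p • u + q • v) := by
  simp only [map_add, map_neg, map_smul, rev_a, rev_u, rev_v, smul_neg, neg_add, neg_neg]

lemma x_eq_zero {p q : ℝ} (h : p • u + q • v = 0) : p = 0 ∧ q = 0 := by
  have hinj : Function.Injective (algebraMap ℝ CGA) := (algebraMap ℝ CGA).injective
  set d3 : Module.Dual ℝ (Fin 5 → ℝ) := LinearMap.proj 3 with hd3
  have h3u : contractLeft (Q := Qcga) d3 u = -f0 := by
    rw [u, f0, g, contractLeft_ι_mul, contractLeft_ι]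
    have : d3 m0 = 0 := by simp [hd3, m0, Pi.single_apply]
    have hw : d3 mw = 1 := by simp [hd3, mw, Pi.single_apply]
    rw [this, hw, map_one, mul_one, zero_smul, zero_sub, ← f0]
  have h3v : contractLeft (Q := Qcga) d3 v = -f1 := by
    rw [v, f1, g, contractLeft_ι_mul, contractLeft_ι]
    have : d3 m1 = 0 := by simp [hd3, m1, Pi.single_apply]
    have hw : d3 mw = 1 := by simp [hd3, mw, Pi.single_apply]
    rw [this, hw, map_one, mul_one, zero_smul, zero_sub, ← f1]
  have h2 : p • f0 + q • f1 = 0 := by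
    have := congrArg (contractLeft (Q := Qcga) d3) h
    simp only [map_add, map_smul, h3u, h3v, map_zero, smul_neg] at this
    linear_combination (norm := module) -this
  have hι : CliffordAlgebra.ι Qcga (p • m0 + q • m1) = 0 := by
    rw [map_add, map_smul, map_smul, ← f0, ← f1, h2]
  have key : ∀ i : Fin 5, algebraMap ℝ CGA ((p • m0 + q • m1) i) = 0 := by
    intro i
    set di : Module.Dual ℝ (Fin 5 → ℝ) := LinearMap.proj i with hdi
    have := congrArg (contractLeft (Q := Qcga) di) hι
    rw [contractLeft_ι, map_zero] at this
    exact this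
  constructor
  · have := hinj ((key 0).trans (map_zero _).symm)
    simpa [m0, m1, Pi.single_apply] using this
  · have := hinj ((key 1).trans (map_zero _).symm)
    simpa [m0, m1, Pi.single_apply] using this

end Stmt12Aux

/-- Coefficientwise reversion of a polynomial over CGA. -/
noncomputable def prev (P : Polynomial CGA) : Polynomial CGA :=
  P.sum fun n a => C (CliffordAlgebra.reverse a) * X ^ n

/-- `P` is a motion polynomial: `P·P̃ = P̃·P` is a nonzero real polynomial. -/
def IsMotionPoly (P : Polynomial CGA) : Prop :=
  ∃ p : Polynomial ℝ, p ≠ 0 ∧ P * prev P = p.map (algebraMap ℝ CGA) ∧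
    prev P * P = p.map (algebraMap ℝ CGA)

namespace Stmt12Aux

lemma prev_coeff (P : Polynomial CGA) (n : ℕ) :
    (prev P).coeff n = CliffordAlgebra.reverse (P.coeff n) := by
  rw [prev, Polynomial.sum_def]
  simp_rw [C_mul_X_pow_eq_monomial]
  rw [finset_sum_coeff]
  simp_rw [coeff_monomial]
  rw [Finset.sum_ite_eq']
  by_cases h : n ∈ P.support
  · simp [h]
  · simp [h, Polynomial.notMem_support_iff.mp h]

lemma prev_linear (b : CGA) :
    prev (X - C b) = X - C (CliffordAlgebra.reverse b) := by
  ext n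
  rw [prev_coeff]
  simp only [coeff_sub, coeff_X, coeff_C, map_sub,
    apply_ite (CliffordAlgebra.reverse (Q := Qcga)), CliffordAlgebra.reverse.map_one, map_zero]

lemma prev_quad (b c : CGA) :
    prev (X ^ 2 + C b * X + C c)
      = X ^ 2 + C (CliffordAlgebra.reverse b) * X + C (CliffordAlgebra.reverse c) := by
  ext n
  rw [prev_coeff]
  simp only [coeff_add, coeff_X_pow, coeff_C_mul, coeff_X, coeff_C, mul_ite, mul_one, mul_zero,
    map_add, apply_ite (CliffordAlgebra.reverse (Q := Qcga)), CliffordAlgebra.reverse.map_one,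
    map_zero]

lemma lin_mul_lin (b c : CGA) :
    (X - C b) * (X - C c) = X ^ 2 + C (-(b + c)) * X + C (b * c) := by
  rw [sub_mul, mul_sub, mul_sub, X_mul_C, ← C_mul, ← sq]
  simp only [map_neg, map_add, neg_add, add_mul, neg_mul]
  abel

lemma lin_mul_lin' (b c : CGA) :
    (X + C b) * (X + C c) = X ^ 2 + C (b + c) * X + C (b * c) := by
  rw [add_mul, mul_add, mul_add, X_mul_C, ← C_mul, ← sq]
  simp only [map_add, add_mul]
  abel

lemma prod_self (b : CGA) (hb : b * b = -1) : (X - C b) * (X + C b) = X ^ 2 + 1 := by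
  have : X + C b = X - C (-b) := by rw [map_neg, sub_neg_eq_add]
  rw [this, lin_mul_lin]
  simp [hb, mul_neg]

lemma prod_self' (b : CGA) (hb : b * b = -1) : (X + C b) * (X - C b) = X ^ 2 + 1 := by
  have : X - C b = X + C (-b) := by rw [map_neg, ← sub_eq_add_neg]
  rw [this, lin_mul_lin']
  simp [hb, mul_neg]

lemma central_sq (P : Polynomial CGA) : Commute (X ^ 2 + 1) P :=
  ((Polynomial.commute_X P).pow_left 2).add_left (Commute.one_left P)

lemma map_sq_add_one :
    ((X ^ 2 + 1 : Polynomial ℝ)).map (algebraMap ℝ CGA) = X ^ 2 + 1 := by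
  simp

lemma sq_add_one_ne : (X ^ 2 + 1 : Polynomial ℝ) ≠ 0 := by
  intro h
  have := congrArg (Polynomial.eval 0) h
  simp at this

end Stmt12Aux

namespace Stmt12Aux
open CliffordAlgebra

theorem key (p q : ℝ) (h₁ h₂ : CGA)
    (e1 : h₁ = -(eCGA 0 * eCGA 1) + p • (eCGA 0 * eCGA 3 + eCGA 0 * eCGA 4) +
      q • (eCGA 1 * eCGA 3 + eCGA 1 * eCGA 4))
    (e2 : h₂ = eCGA 0 * eCGA 1) :
    (h₁ + reverse h₁ = 0) ∧ (h₁ * reverse h₁ = 1) ∧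
    IsMotionPoly (X - C h₁) ∧ IsMotionPoly ((X - C h₁) * (X - C h₂)) ∧
    (h₁ - reverse h₂ = p • (eCGA 0 * eCGA 3 + eCGA 0 * eCGA 4) +
      q • (eCGA 1 * eCGA 3 + eCGA 1 * eCGA 4)) ∧
    ((h₁ - reverse h₂) * reverse (h₁ - reverse h₂) = 0) ∧
    (¬ (p = 0 ∧ q = 0) → h₁ - reverse h₂ ≠ 0 ∧ ¬ IsUnit (h₁ - reverse h₂)) := by
  subst e1 e2
  rw [ea, eu, ev]
  have hA : (-a + p • u + q • v) * (-a + p • u + q • v) = -1 := hsq p q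
  have hArev : reverse (Q := Qcga) (-a + p • u + q • v) = -(-a + p • u + q • v) := hrev p q
  have hdiff : -a + p • u + q • v - reverse (Q := Qcga) a = p • u + q • v := by
    rw [rev_a, sub_neg_eq_add]; abel
  have hp1 : prev (X - C (-a + p • u + q • v)) = X + C (-a + p • u + q • v) := by
    rw [prev_linear, hArev, map_neg, sub_neg_eq_add]
  refine ⟨?_, ?_, ?_, ?_, hdiff, ?_, ?_⟩
  · rw [hArev]; exact add_neg_cancel _
  · rw [hArev, mul_neg, hA, neg_neg]
  · refine ⟨X ^ 2 + 1, sq_add_one_ne, ?_, ?_⟩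
    · rw [hp1, map_sq_add_one, prod_self _ hA]
    · rw [hp1, map_sq_add_one, prod_self' _ hA]
  · refine ⟨(X ^ 2 + 1) ^ 2, pow_ne_zero _ sq_add_one_ne, ?_, ?_⟩
    · have hprev : prev ((X - C (-a + p • u + q • v)) * (X - C a))
          = (X + C a) * (X + C (-a + p • u + q • v)) := by
        rw [lin_mul_lin, prev_quad, lin_mul_lin']
        rw [map_neg, map_add, hArev, rev_a, neg_add, neg_neg, neg_neg]
        rw [reverse.map_mul, rev_a, hArev, neg_mul_neg]
        rw [add_comm a (-a + p • u + q • v)]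
      rw [hprev]
      calc (X - C (-a + p • u + q • v)) * (X - C a) * ((X + C a) * (X + C (-a + p • u + q • v)))
          = (X - C (-a + p • u + q • v)) * (((X - C a) * (X + C a)) * (X + C (-a + p • u + q • v))) := by
            rw [mul_assoc, ← mul_assoc (X - C a)]
        _ = (X - C (-a + p • u + q • v)) * ((X ^ 2 + 1) * (X + C (-a + p • u + q • v))) := by
            rw [prod_self _ a_sq]
        _ = (X - C (-a + p • u + q • v)) * ((X + C (-a + p • u + q • v)) * (X ^ 2 + 1)) := by
            rw [(central_sq _).eq]
        _ = ((X - C (-a + p • u + q • v)) * (X + C (-a + p • u + q • v))) * (X ^ 2 + 1) := by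
            rw [mul_assoc]
        _ = (X ^ 2 + 1) * (X ^ 2 + 1) := by rw [prod_self _ hA]
        _ = ((X ^ 2 + 1 : Polynomial ℝ) ^ 2).map (algebraMap ℝ CGA) := by
            rw [Polynomial.map_pow, map_sq_add_one]
            noncomm_ring
    · have hprev : prev ((X - C (-a + p • u + q • v)) * (X - C a))
          = (X + C a) * (X + C (-a + p • u + q • v)) := by
        rw [lin_mul_lin, prev_quad, lin_mul_lin']
        rw [map_neg, map_add, hArev, rev_a, neg_add, neg_neg, neg_neg]
        rw [reverse.map_mul, rev_a, hArev, neg_mul_neg]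
        rw [add_comm a (-a + p • u + q • v)]
      rw [hprev]
      calc (X + C a) * (X + C (-a + p • u + q • v)) * ((X - C (-a + p • u + q • v)) * (X - C a))
          = (X + C a) * (((X + C (-a + p • u + q • v)) * (X - C (-a + p • u + q • v))) * (X - C a)) := by
            rw [mul_assoc, ← mul_assoc (X + C (-a + p • u + q • v))]
        _ = (X + C a) * ((X ^ 2 + 1) * (X - C a)) := by rw [prod_self' _ hA]
        _ = (X + C a) * ((X - C a) * (X ^ 2 + 1)) := by rw [(central_sq _).eq]
        _ = ((X + C a) * (X - C a)) * (X ^ 2 + 1) := by rw [mul_assoc]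
        _ = (X ^ 2 + 1) * (X ^ 2 + 1) := by rw [prod_self' _ a_sq]
        _ = ((X ^ 2 + 1 : Polynomial ℝ) ^ 2).map (algebraMap ℝ CGA) := by
            rw [Polynomial.map_pow, map_sq_add_one]
            noncomm_ring
  · rw [hdiff, xrev, mul_neg, xsq, neg_zero]
  · intro hpq
    rw [hdiff]
    have hne : p • u + q • v ≠ 0 := fun h0 => hpq (x_eq_zero h0)
    refine ⟨hne, fun hu => ?_⟩
    obtain ⟨w, hw⟩ := hu
    have h0 : (↑w⁻¹ : CGA) * ((p • u + q • v) * (p • u + q • v)) = 0 := by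
      rw [xsq, mul_zero]
    rw [← hw, ← mul_assoc, Units.inv_mul, one_mul, hw] at h0
    exact hne h0

end Stmt12Aux

/-- the circular translation: for all reals `p, q`, with
`h₁ = −e₁₂ + p(e₁₊+e₁₋) + q(e₂₊+e₂₋)` and `h₂ = e₁₂`:
(i) `h₁ + h̃₁ = 0` and `h₁·h̃₁ = 1`, so `t−h₁` is a motion polynomial;
(ii) `C = (t−h₁)(t−h₂)` is a motion polynomial;
(iii) `h₁ − h̃₂ = p(e₁₊+e₁₋) + q(e₂₊+e₂₋)` satisfies `(h₁−h̃₂)·(h₁−h̃₂)̃ = 0`,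
hence whenever `(p,q) ≠ (0,0)` the element `h₁ − h̃₂` is a nonzero non-invertible
element and the factorization of `C` is irregular. -/
theorem stmt12 (p q : ℝ) :
    let h₁ : CGA := -(eCGA 0 * eCGA 1) + p • (eCGA 0 * eCGA 3 + eCGA 0 * eCGA 4) +
      q • (eCGA 1 * eCGA 3 + eCGA 1 * eCGA 4)
    let h₂ : CGA := eCGA 0 * eCGA 1
    (h₁ + CliffordAlgebra.reverse h₁ = 0) ∧
    (h₁ * CliffordAlgebra.reverse h₁ = 1) ∧
    IsMotionPoly (X - C h₁) ∧
    IsMotionPoly ((X - C h₁) * (X - C h₂)) ∧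
    (h₁ - CliffordAlgebra.reverse h₂
      = p • (eCGA 0 * eCGA 3 + eCGA 0 * eCGA 4) + q • (eCGA 1 * eCGA 3 + eCGA 1 * eCGA 4)) ∧
    ((h₁ - CliffordAlgebra.reverse h₂) *
      CliffordAlgebra.reverse (h₁ - CliffordAlgebra.reverse h₂) = 0) ∧
    (¬ (p = 0 ∧ q = 0) →
      h₁ - CliffordAlgebra.reverse h₂ ≠ 0 ∧ ¬ IsUnit (h₁ - CliffordAlgebra.reverse h₂)) := by
  intro h₁ h₂
  exact Stmt12Aux.key p q h₁ h₂ rfl rfl
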